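/- Let R be a regular local ring with regular system of parameters x_1,...,x_n, and let u_1,...,u_n be the standard basis of Z^n recording exponents. A monoidal transform R → R' = (R[x_1/x_i, x_2/x_i])_p with center (x_1,x_2) along a valuation ν (with ν(x_1),...,ν(x_n) rationally independent positive reals) replaces the exponent vectors by u_1,...,u_n with u_2 replaced by u_1+u_2 or u_1 replaced by u_1+u_2, according to whether ν(x_1) < ν(x_2) or ν(x_2) < ν(x_1); i.e., the monomial valuation data transforms exactly as the star subdivision of the cone ⟨u_1,...,u_n⟩ at u_1+u_2 along the vector v = Σ ν(x_i) u_i. -/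
import Mathlib


/-- The real vector obtained from an integer vector. -/
def toReal {n : ℕ} (w : Fin n → ℤ) : Fin n → ℝ := fun j => (w j : ℝ)

/-- The cone of nonnegative real combinations of the integer vectors `w i`. -/
def realCone {n m : ℕ} (w : Fin m → Fin n → ℤ) : Set (Fin n → ℝ) :=
  {x | ∃ c : Fin m → ℝ, (∀ i, 0 ≤ c i) ∧ x = ∑ i, c i • toReal (w i)}

/-- `w` is a `ℤ`-basis of the lattice `ℤ^n`. -/
def IsZBasis {n : ℕ} (w : Fin n → Fin n → ℤ) : Prop := IsUnit (Matrix.of w).det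

/-- One step of star subdivision along the vector `v`: replace some generator `w j`
by `w i + w j` (i.e. pass to the cone of the star subdivision at `w i + w j`
omitting `w j`), where the resulting cone must contain `v`. -/
def StarStep {n : ℕ} (v : Fin n → ℝ) (w w' : Fin n → Fin n → ℤ) : Prop :=
  ∃ i j : Fin n, i ≠ j ∧ w' = Function.update w j (w i + w j) ∧ v ∈ realCone w'

/-- Monoidal transforms with center `(x 0, x 1)` along a valuation transform the
valuation data `(b i) = (ν (x i))` exactly as the star subdivision of the cone on the
exponent basis `u` at `u 0 + u 1` along `v = Σ b i • u i`: if `b 0 < b 1` the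
generator `u 0` is replaced by `u 0 + u 1` and `b 1` by `b 1 - b 0`, and
symmetrically if `b 1 < b 0`. -/
lemma toReal_add {n : ℕ} (a c : Fin n → ℤ) : toReal (a + c) = toReal a + toReal c := by
  funext j; simp [toReal]

lemma sum_split {n : ℕ} (f : Fin (n+2) → Fin (n+2) → ℝ) :
    ∑ i, f i = f 0 + f 1 + ∑ i : Fin n, f i.succ.succ := by
  rw [Fin.sum_univ_succ, Fin.sum_univ_succ]
  simp [add_assoc]

lemma succ_succ_ne0 {n : ℕ} (i : Fin n) : (i.succ.succ : Fin (n+2)) ≠ 0 :=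
  Fin.succ_ne_zero _

lemma succ_succ_ne1 {n : ℕ} (i : Fin n) : (i.succ.succ : Fin (n+2)) ≠ 1 := by
  intro h
  have := Fin.succ_injective _ (h.trans (Fin.succ_zero_eq_one).symm)
  exact Fin.succ_ne_zero _ this

theorem stmt19 {n : ℕ} (u : Fin (n+2) → Fin (n+2) → ℤ) (hu : IsZBasis u)
    (b : Fin (n+2) → ℝ) (hb : ∀ i, 0 < b i) (hind : LinearIndependent ℚ b)
    (v : Fin (n+2) → ℝ) (hv : v = ∑ i, b i • toReal (u i)) :
    (b 0 < b 1 →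
      StarStep v u (Function.update u 0 (u 0 + u 1)) ∧
      v = ∑ i, Function.update b 1 (b 1 - b 0) i • toReal (Function.update u 0 (u 0 + u 1) i)) ∧
    (b 1 < b 0 →
      StarStep v u (Function.update u 1 (u 0 + u 1)) ∧
      v = ∑ i, Function.update b 0 (b 0 - b 1) i • toReal (Function.update u 1 (u 0 + u 1) i)) := by
  have h01 : (0 : Fin (n+2)) ≠ 1 := Fin.zero_ne_one
  constructor
  · intro hlt
    have heq : v = ∑ i, Function.update b 1 (b 1 - b 0) i •
        toReal (Function.update u 0 (u 0 + u 1) i) := by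
      rw [hv, sum_split, sum_split]
      rw [Finset.sum_congr rfl (fun (i : Fin n) _ =>
        (by rw [Function.update_of_ne (succ_succ_ne1 i), Function.update_of_ne (succ_succ_ne0 i)] :
          Function.update b 1 (b 1 - b 0) i.succ.succ •
            toReal (Function.update u 0 (u 0 + u 1) i.succ.succ) =
            b i.succ.succ • toReal (u i.succ.succ)))]
      simp only [Function.update_self, Function.update_of_ne h01,
        Function.update_of_ne h01.symm, toReal_add]
      module
    refine ⟨⟨1, 0, h01.symm, ?_, ?_⟩, heq⟩
    · rw [add_comm (u 0) (u 1)]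
    · exact ⟨Function.update b 1 (b 1 - b 0), fun i => by
        rcases eq_or_ne i 1 with h | h
        · subst h; rw [Function.update_self]; linarith
        · rw [Function.update_of_ne h]; exact (hb i).le, heq⟩
  · intro hlt
    have heq : v = ∑ i, Function.update b 0 (b 0 - b 1) i •
        toReal (Function.update u 1 (u 0 + u 1) i) := by
      rw [hv, sum_split, sum_split]
      rw [Finset.sum_congr rfl (fun (i : Fin n) _ =>
        (by rw [Function.update_of_ne (succ_succ_ne0 i), Function.update_of_ne (succ_succ_ne1 i)] :
          Function.update b 0 (b 0 - b 1) i.succ.succ •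
            toReal (Function.update u 1 (u 0 + u 1) i.succ.succ) =
            b i.succ.succ • toReal (u i.succ.succ)))]
      simp only [Function.update_self, Function.update_of_ne h01,
        Function.update_of_ne h01.symm, toReal_add]
      module
    refine ⟨⟨0, 1, h01, rfl, ?_⟩, heq⟩
    exact ⟨Function.update b 0 (b 0 - b 1), fun i => by
      rcases eq_or_ne i 0 with h | h
      · subst h; rw [Function.update_self]; linarith
      · rw [Function.update_of_ne h]; exact (hb i).le, heq⟩
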